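/- Let 0 < p < 1, A ≥ 0, C₂ > 0, C₃ > 0, τ₀ > 0, and let u : (0, τ₀] → ℝ be continuous and satisfy e^{−C₂·ρ}·ρ^{−2p}·(A − C₃·e^{C₂·ρ}·ρ^{1+2p}) ≤ u(ρ) ≤ e^{C₂·ρ}·ρ^{−2p}·(A + C₃·ρ^{1+2p}) for all ρ ∈ (0, τ₀]. Then ρ ↦ ρ^p·u(ρ) is integrable on (0, τ) for every τ ∈ (0, τ₀], and lim_{τ→0⁺} ((1−p)/τ^{1−p}) · ∫_0^τ ρ^p·u(ρ) dρ = A. -/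

import Mathlib

open MeasureTheory

private lemma rpow_integrableOn_aux {c τ : ℝ} (hc : -1 < c) (hτ : 0 < τ) :
    IntegrableOn (fun ρ : ℝ => ρ ^ c) (Set.Ioo 0 τ) := by
  have h := intervalIntegral.intervalIntegrable_rpow' (a := 0) (b := τ) hc
  rwa [intervalIntegrable_iff_integrableOn_Ioo_of_le hτ.le] at h

private lemma rpow_integral_aux {c τ : ℝ} (hc : -1 < c) (hτ : 0 < τ) :
    ∫ ρ in Set.Ioo 0 τ, ρ ^ c = τ ^ (c + 1) / (c + 1) := by
  rw [← MeasureTheory.integral_Ioc_eq_integral_Ioo, ← intervalIntegral.integral_of_le hτ.le,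
    integral_rpow (Or.inl hc), Real.zero_rpow (by linarith)]
  ring

/-- Squeeze computation ((4.10)–(4.14)) behind Lemma 4.2: if a continuous
function `u` on `(0, τ₀]` satisfies the two-sided bound
`e^{-C₂ρ} ρ^{-2p} (A - C₃ e^{C₂ρ} ρ^{1+2p}) ≤ u(ρ) ≤ e^{C₂ρ} ρ^{-2p} (A + C₃ ρ^{1+2p})`,
then `ρ ↦ ρ^p u(ρ)` is integrable on `(0,τ)` for every `τ ∈ (0, τ₀]` and
`((1-p)/τ^{1-p}) ∫_0^τ ρ^p u(ρ) dρ → A` as `τ → 0⁺`. -/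
theorem reduced_distance_initial_limit (p A C₂ C₃ τ₀ : ℝ) (hp : 0 < p)
    (hp1 : p < 1) (hA : 0 ≤ A) (hC₂ : 0 < C₂) (hC₃ : 0 < C₃) (hτ₀ : 0 < τ₀)
    (u : ℝ → ℝ) (hu : ContinuousOn u (Set.Ioc 0 τ₀))
    (hlow : ∀ ρ ∈ Set.Ioc 0 τ₀,
      Real.exp (-C₂ * ρ) * ρ ^ (-(2 * p)) * (A - C₃ * Real.exp (C₂ * ρ) * ρ ^ (1 + 2 * p))
        ≤ u ρ)
    (hup : ∀ ρ ∈ Set.Ioc 0 τ₀,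
      u ρ ≤ Real.exp (C₂ * ρ) * ρ ^ (-(2 * p)) * (A + C₃ * ρ ^ (1 + 2 * p))) :
    (∀ τ ∈ Set.Ioc 0 τ₀,
      IntegrableOn (fun ρ => ρ ^ p * u ρ) (Set.Ioo 0 τ)) ∧
    Filter.Tendsto
      (fun τ => ((1 - p) / τ ^ (1 - p)) * ∫ ρ in Set.Ioo 0 τ, ρ ^ p * u ρ)
      (nhdsWithin 0 (Set.Ioi 0)) (nhds A) := by
  have h1p : (0:ℝ) < 1 - p := by linarith
  have hc1 : (-1:ℝ) < -p := by linarith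
  have hc2 : (-1:ℝ) < 1 + p := by linarith
  -- pointwise bounds for ρ^p * u ρ
  have hptup : ∀ ρ ∈ Set.Ioc 0 τ₀,
      ρ ^ p * u ρ ≤ Real.exp (C₂ * ρ) * (A * ρ ^ (-p) + C₃ * ρ ^ (1 + p)) := by
    intro ρ hρ
    have hρ0 : (0:ℝ) < ρ := hρ.1
    have hA1 : ρ ^ p * ρ ^ (-(2 * p)) = ρ ^ (-p) := by
      rw [← Real.rpow_add hρ0]; congr 1; ring
    have hA2 : ρ ^ p * ρ ^ (-(2 * p)) * ρ ^ (1 + 2 * p) = ρ ^ (1 + p) := by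
      rw [← Real.rpow_add hρ0, ← Real.rpow_add hρ0]; congr 1; ring
    calc ρ ^ p * u ρ
        ≤ ρ ^ p * (Real.exp (C₂ * ρ) * ρ ^ (-(2 * p)) * (A + C₃ * ρ ^ (1 + 2 * p))) :=
          mul_le_mul_of_nonneg_left (hup ρ hρ) (Real.rpow_nonneg hρ0.le _)
      _ = Real.exp (C₂ * ρ) * (A * ρ ^ (-p) + C₃ * ρ ^ (1 + p)) := by
          rw [← hA1, ← hA2]; ring
  have hptlow : ∀ ρ ∈ Set.Ioc 0 τ₀,
      A * Real.exp (-C₂ * ρ) * ρ ^ (-p) - C₃ * ρ ^ (1 + p) ≤ ρ ^ p * u ρ := by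
    intro ρ hρ
    have hρ0 : (0:ℝ) < ρ := hρ.1
    have hA1 : ρ ^ p * ρ ^ (-(2 * p)) = ρ ^ (-p) := by
      rw [← Real.rpow_add hρ0]; congr 1; ring
    have hA2 : ρ ^ p * ρ ^ (-(2 * p)) * ρ ^ (1 + 2 * p) = ρ ^ (1 + p) := by
      rw [← Real.rpow_add hρ0, ← Real.rpow_add hρ0]; congr 1; ring
    have hE : Real.exp (-C₂ * ρ) * Real.exp (C₂ * ρ) = 1 := by
      rw [← Real.exp_add]; simp
    calc A * Real.exp (-C₂ * ρ) * ρ ^ (-p) - C₃ * ρ ^ (1 + p)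
        = ρ ^ p * (Real.exp (-C₂ * ρ) * ρ ^ (-(2 * p)) *
            (A - C₃ * Real.exp (C₂ * ρ) * ρ ^ (1 + 2 * p))) := by
          rw [← hA1, ← hA2]
          linear_combination (C₃ * (ρ ^ p * ρ ^ (-(2 * p)) * ρ ^ (1 + 2 * p))) * hE
      _ ≤ ρ ^ p * u ρ :=
          mul_le_mul_of_nonneg_left (hlow ρ hρ) (Real.rpow_nonneg hρ0.le _)
  -- integrability
  have hInt : ∀ τ ∈ Set.Ioc 0 τ₀, IntegrableOn (fun ρ => ρ ^ p * u ρ) (Set.Ioo 0 τ) := by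
    intro τ hτ
    have hτ0 : (0:ℝ) < τ := hτ.1
    have hsub : Set.Ioo (0:ℝ) τ ⊆ Set.Ioc 0 τ₀ := fun x hx => ⟨hx.1, hx.2.le.trans hτ.2⟩
    have hgint : IntegrableOn
        (fun ρ : ℝ => Real.exp (C₂ * τ₀) * (A * ρ ^ (-p) + C₃ * ρ ^ (1 + p)))
        (Set.Ioo 0 τ) :=
      (((rpow_integrableOn_aux hc1 hτ0).const_mul A).add
        ((rpow_integrableOn_aux hc2 hτ0).const_mul C₃)).const_mul _
    have hfc : ContinuousOn (fun ρ => ρ ^ p * u ρ) (Set.Ioo 0 τ) :=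
      ContinuousOn.mul
        (fun ρ hρ => (Real.continuousAt_rpow_const ρ p (Or.inl (ne_of_gt hρ.1))).continuousWithinAt)
        (hu.mono hsub)
    refine Integrable.mono' hgint (hfc.aestronglyMeasurable measurableSet_Ioo) ?_
    rw [ae_restrict_iff' measurableSet_Ioo]
    refine Filter.Eventually.of_forall fun ρ hρ => ?_
    have hρ' : ρ ∈ Set.Ioc 0 τ₀ := hsub hρ
    have hρ0 : (0:ℝ) < ρ := hρ.1
    have hE1 : (1:ℝ) ≤ Real.exp (C₂ * τ₀) := Real.one_le_exp (by positivity)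
    have hE2 : Real.exp (C₂ * ρ) ≤ Real.exp (C₂ * τ₀) :=
      Real.exp_le_exp.2 (by nlinarith [hρ'.2])
    have hX : (0:ℝ) ≤ A * ρ ^ (-p) := by positivity
    have hY : (0:ℝ) ≤ C₃ * ρ ^ (1 + p) := by positivity
    have hE0 : (0:ℝ) < Real.exp (-C₂ * ρ) := Real.exp_pos _
    have hup' := hptup ρ hρ'
    have hlow' := hptlow ρ hρ'
    rw [Real.norm_eq_abs, abs_le]
    constructor
    · nlinarith [mul_nonneg hA (mul_nonneg hE0.le (Real.rpow_nonneg hρ0.le (-p)))]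
    · nlinarith [Real.exp_pos (C₂ * ρ)]
  refine ⟨hInt, ?_⟩
  -- integral bounds
  set c : ℝ := (1 - p) * C₃ / (2 + p) with hc
  have hFlow : ∀ τ ∈ Set.Ioc 0 τ₀,
      A * Real.exp (-C₂ * τ) - c * τ ^ (1 + 2 * p)
        ≤ ((1 - p) / τ ^ (1 - p)) * ∫ ρ in Set.Ioo 0 τ, ρ ^ p * u ρ := by
    intro τ hτ
    have hτ0 : (0:ℝ) < τ := hτ.1
    have hglow : IntegrableOn
        (fun ρ : ℝ => A * Real.exp (-C₂ * τ) * ρ ^ (-p) - C₃ * ρ ^ (1 + p))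
        (Set.Ioo 0 τ) :=
      ((rpow_integrableOn_aux hc1 hτ0).const_mul _).sub
        ((rpow_integrableOn_aux hc2 hτ0).const_mul _)
    have hIle : ∫ ρ in Set.Ioo 0 τ, (A * Real.exp (-C₂ * τ) * ρ ^ (-p) - C₃ * ρ ^ (1 + p))
        ≤ ∫ ρ in Set.Ioo 0 τ, ρ ^ p * u ρ := by
      refine setIntegral_mono_on hglow (hInt τ hτ) measurableSet_Ioo fun ρ hρ => ?_
      have hρ' : ρ ∈ Set.Ioc 0 τ₀ := ⟨hρ.1, hρ.2.le.trans hτ.2⟩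
      have hEτ : Real.exp (-C₂ * τ) ≤ Real.exp (-C₂ * ρ) :=
        Real.exp_le_exp.2 (by nlinarith [hρ.2.le])
      have h2 := hptlow ρ hρ'
      have hX : (0:ℝ) ≤ ρ ^ (-p) := Real.rpow_nonneg hρ.1.le _
      have h3 := mul_le_mul_of_nonneg_left (mul_le_mul_of_nonneg_right hEτ hX) hA
      simp only [mul_assoc] at h3 ⊢
      linarith
    have hIval : ∫ ρ in Set.Ioo 0 τ, (A * Real.exp (-C₂ * τ) * ρ ^ (-p) - C₃ * ρ ^ (1 + p))
        = A * Real.exp (-C₂ * τ) * (τ ^ (1 - p) / (1 - p)) - C₃ * (τ ^ (2 + p) / (2 + p)) := by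
      rw [integral_sub ((rpow_integrableOn_aux hc1 hτ0).const_mul _)
        ((rpow_integrableOn_aux hc2 hτ0).const_mul _),
        integral_const_mul, integral_const_mul,
        rpow_integral_aux hc1 hτ0, rpow_integral_aux hc2 hτ0,
        show -p + 1 = 1 - p by ring, show 1 + p + 1 = 2 + p by ring]
    have ht1 : (0:ℝ) < τ ^ (1 - p) := Real.rpow_pos_of_pos hτ0 _
    have hsplit : τ ^ (2 + p) = τ ^ (1 - p) * τ ^ (1 + 2 * p) := by
      rw [← Real.rpow_add hτ0]; congr 1; ring
    have hfac : (0:ℝ) < (1 - p) / τ ^ (1 - p) := by positivity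
    calc A * Real.exp (-C₂ * τ) - c * τ ^ (1 + 2 * p)
        = ((1 - p) / τ ^ (1 - p)) *
          (A * Real.exp (-C₂ * τ) * (τ ^ (1 - p) / (1 - p)) - C₃ * (τ ^ (2 + p) / (2 + p))) := by
          rw [hsplit, hc]; field_simp
      _ ≤ ((1 - p) / τ ^ (1 - p)) * ∫ ρ in Set.Ioo 0 τ, ρ ^ p * u ρ := by
          rw [← hIval]; exact mul_le_mul_of_nonneg_left hIle hfac.le
  have hFup : ∀ τ ∈ Set.Ioc 0 τ₀,
      ((1 - p) / τ ^ (1 - p)) * ∫ ρ in Set.Ioo 0 τ, ρ ^ p * u ρ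
        ≤ Real.exp (C₂ * τ) * (A + c * τ ^ (1 + 2 * p)) := by
    intro τ hτ
    have hτ0 : (0:ℝ) < τ := hτ.1
    have hgup : IntegrableOn
        (fun ρ : ℝ => Real.exp (C₂ * τ) * (A * ρ ^ (-p) + C₃ * ρ ^ (1 + p)))
        (Set.Ioo 0 τ) :=
      (((rpow_integrableOn_aux hc1 hτ0).const_mul A).add
        ((rpow_integrableOn_aux hc2 hτ0).const_mul C₃)).const_mul _
    have hIle : (∫ ρ in Set.Ioo 0 τ, ρ ^ p * u ρ)
        ≤ ∫ ρ in Set.Ioo 0 τ, Real.exp (C₂ * τ) * (A * ρ ^ (-p) + C₃ * ρ ^ (1 + p)) := by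
      refine setIntegral_mono_on (hInt τ hτ) hgup measurableSet_Ioo fun ρ hρ => ?_
      have hρ' : ρ ∈ Set.Ioc 0 τ₀ := ⟨hρ.1, hρ.2.le.trans hτ.2⟩
      have hEτ : Real.exp (C₂ * ρ) ≤ Real.exp (C₂ * τ) :=
        Real.exp_le_exp.2 (by nlinarith [hρ.2.le])
      have h2 := hptup ρ hρ'
      have hX : (0:ℝ) ≤ A * ρ ^ (-p) + C₃ * ρ ^ (1 + p) := by
        have := Real.rpow_nonneg hρ.1.le (-p)
        have := Real.rpow_nonneg hρ.1.le (1 + p)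
        positivity
      have h3 := mul_le_mul_of_nonneg_right hEτ hX
      linarith
    have hIval : ∫ ρ in Set.Ioo 0 τ, Real.exp (C₂ * τ) * (A * ρ ^ (-p) + C₃ * ρ ^ (1 + p))
        = Real.exp (C₂ * τ) *
          (A * (τ ^ (1 - p) / (1 - p)) + C₃ * (τ ^ (2 + p) / (2 + p))) := by
      rw [integral_const_mul,
        integral_add ((rpow_integrableOn_aux hc1 hτ0).const_mul _)
          ((rpow_integrableOn_aux hc2 hτ0).const_mul _),
        integral_const_mul, integral_const_mul,
        rpow_integral_aux hc1 hτ0, rpow_integral_aux hc2 hτ0,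
        show -p + 1 = 1 - p by ring, show 1 + p + 1 = 2 + p by ring]
    have ht1 : (0:ℝ) < τ ^ (1 - p) := Real.rpow_pos_of_pos hτ0 _
    have hsplit : τ ^ (2 + p) = τ ^ (1 - p) * τ ^ (1 + 2 * p) := by
      rw [← Real.rpow_add hτ0]; congr 1; ring
    have hfac : (0:ℝ) < (1 - p) / τ ^ (1 - p) := by positivity
    calc ((1 - p) / τ ^ (1 - p)) * ∫ ρ in Set.Ioo 0 τ, ρ ^ p * u ρ
        ≤ ((1 - p) / τ ^ (1 - p)) *
          (Real.exp (C₂ * τ) * (A * (τ ^ (1 - p) / (1 - p)) + C₃ * (τ ^ (2 + p) / (2 + p)))) := by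
          rw [← hIval]; exact mul_le_mul_of_nonneg_left hIle hfac.le
      _ = Real.exp (C₂ * τ) * (A + c * τ ^ (1 + 2 * p)) := by
          rw [hsplit, hc]; field_simp
  -- squeeze
  have hmem : Set.Ioc (0:ℝ) τ₀ ∈ nhdsWithin (0:ℝ) (Set.Ioi 0) :=
    Ioc_mem_nhdsGT_of_mem ⟨le_refl 0, hτ₀⟩
  have hrt : Filter.Tendsto (fun τ : ℝ => τ ^ (1 + 2 * p)) (nhdsWithin 0 (Set.Ioi 0)) (nhds 0) := by
    have h := (Real.continuousAt_rpow_const 0 (1 + 2 * p) (Or.inr (by linarith))).tendsto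
    rw [Real.zero_rpow (by linarith)] at h
    exact h.mono_left nhdsWithin_le_nhds
  have hexpn : Filter.Tendsto (fun τ : ℝ => Real.exp (-C₂ * τ)) (nhdsWithin 0 (Set.Ioi 0)) (nhds 1) := by
    have h : Filter.Tendsto (fun τ : ℝ => Real.exp (-C₂ * τ)) (nhds 0) (nhds (Real.exp (-C₂ * 0))) :=
      (Real.continuous_exp.comp (continuous_const.mul continuous_id)).tendsto 0
    simpa using h.mono_left nhdsWithin_le_nhds
  have hexpp : Filter.Tendsto (fun τ : ℝ => Real.exp (C₂ * τ)) (nhdsWithin 0 (Set.Ioi 0)) (nhds 1) := by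
    have h : Filter.Tendsto (fun τ : ℝ => Real.exp (C₂ * τ)) (nhds 0) (nhds (Real.exp (C₂ * 0))) :=
      (Real.continuous_exp.comp (continuous_const.mul continuous_id)).tendsto 0
    simpa using h.mono_left nhdsWithin_le_nhds
  have hlowT : Filter.Tendsto (fun τ : ℝ => A * Real.exp (-C₂ * τ) - c * τ ^ (1 + 2 * p))
      (nhdsWithin 0 (Set.Ioi 0)) (nhds A) := by
    have := ((hexpn.const_mul A).sub (hrt.const_mul c))
    simpa using this
  have hupT : Filter.Tendsto (fun τ : ℝ => Real.exp (C₂ * τ) * (A + c * τ ^ (1 + 2 * p)))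
      (nhdsWithin 0 (Set.Ioi 0)) (nhds A) := by
    have := hexpp.mul ((hrt.const_mul c).const_add A)
    simpa using this
  refine tendsto_of_tendsto_of_tendsto_of_le_of_le' hlowT hupT ?_ ?_
  · filter_upwards [hmem] with τ hτ using hFlow τ hτ
  · filter_upwards [hmem] with τ hτ using hFup τ hτ
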